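/- For fixed p ≥ 2 and n ≥ 3, the expected replication factor p - (p/h_n(α))·Σ_{d=1}^{n-1}((p-1)/p)^d·d^{-α} is strictly decreasing in α, i.e., graphs with more skewed (higher α) degree distributions have lower expected replication under random vertex cuts. -/
import Mathlib

section Aux

open Finset

/-- Chebyshev-type symmetrization identity. -/
private lemma sum_mul_sum_sub (S : Finset ℕ) (a u v : ℕ → ℝ) :
    ∑ d ∈ S, ∑ e ∈ S, (a d - a e) * (v d * u e - u d * v e) =
      2 * ((∑ d ∈ S, a d * v d) * (∑ d ∈ S, u d)
        - (∑ d ∈ S, a d * u d) * (∑ d ∈ S, v d)) := by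
  have h1 : ∀ d ∈ S, ∑ e ∈ S, (a d - a e) * (v d * u e - u d * v e) =
      (a d * v d) * (∑ e ∈ S, u e) - (a d * u d) * (∑ e ∈ S, v e)
      - v d * (∑ e ∈ S, a e * u e) + u d * (∑ e ∈ S, a e * v e) := by
    intro d _
    rw [Finset.mul_sum, Finset.mul_sum, Finset.mul_sum, Finset.mul_sum,
      ← Finset.sum_sub_distrib, ← Finset.sum_sub_distrib, ← Finset.sum_add_distrib]
    exact Finset.sum_congr rfl fun e _ => by ring
  rw [Finset.sum_congr rfl h1]
  rw [Finset.sum_add_distrib, Finset.sum_sub_distrib, Finset.sum_sub_distrib,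
    ← Finset.sum_mul, ← Finset.sum_mul, ← Finset.sum_mul, ← Finset.sum_mul]
  ring

end Aux

/-- For fixed `p ≥ 2` and `n ≥ 3`, the expected replication factor
`R(α) = p - (p / h_n(α)) Σ_{d=1}^{n-1} ((p-1)/p)^d d^(-α)` is strictly decreasing
in `α > 0`. -/
theorem expected_replication_strict_anti_in_alpha (n p : ℕ) (hp : 2 ≤ p) (hn : 3 ≤ n)
    (α β : ℝ) (hα : 0 < α) (hαβ : α < β) :
    (p : ℝ) - ((p : ℝ) / ∑ d' ∈ Finset.Icc 1 (n - 1), (d' : ℝ) ^ (-β)) *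
        ∑ d ∈ Finset.Icc 1 (n - 1), (((p : ℝ) - 1) / (p : ℝ)) ^ d * (d : ℝ) ^ (-β) <
      (p : ℝ) - ((p : ℝ) / ∑ d' ∈ Finset.Icc 1 (n - 1), (d' : ℝ) ^ (-α)) *
          ∑ d ∈ Finset.Icc 1 (n - 1), (((p : ℝ) - 1) / (p : ℝ)) ^ d * (d : ℝ) ^ (-α) := by
  set S := Finset.Icc 1 (n - 1) with hS
  set c : ℝ := ((p : ℝ) - 1) / (p : ℝ) with hc
  have hp0 : (0 : ℝ) < p := by positivity
  have hp1 : (1 : ℝ) < p := by exact_mod_cast lt_of_lt_of_le one_lt_two (by exact_mod_cast hp)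
  have hc0 : 0 < c := div_pos (by linarith) hp0
  have hc1 : c < 1 := (div_lt_one hp0).2 (by linarith)
  have hmem : ∀ d ∈ S, 1 ≤ d := fun d hd => (Finset.mem_Icc.mp hd).1
  have h2n : 2 ≤ n - 1 := by omega
  have h1S : (1 : ℕ) ∈ S := Finset.mem_Icc.mpr ⟨le_refl 1, by omega⟩
  have h2S : (2 : ℕ) ∈ S := Finset.mem_Icc.mpr ⟨by norm_num, h2n⟩
  -- positivity of terms
  have hdpos : ∀ d ∈ S, (0 : ℝ) < d := fun d hd => by
    exact_mod_cast Nat.lt_of_lt_of_le Nat.zero_lt_one (hmem d hd)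
  set a : ℕ → ℝ := fun d => c ^ d with ha
  set u : ℕ → ℝ := fun d => (d : ℝ) ^ (-α) with hu
  set v : ℕ → ℝ := fun d => (d : ℝ) ^ (-β) with hv
  have hupos : ∀ d ∈ S, 0 < u d := fun d hd => Real.rpow_pos_of_pos (hdpos d hd) _
  have hvpos : ∀ d ∈ S, 0 < v d := fun d hd => Real.rpow_pos_of_pos (hdpos d hd) _
  have hU : 0 < ∑ d ∈ S, u d :=
    Finset.sum_pos hupos ⟨1, h1S⟩
  have hV : 0 < ∑ d ∈ S, v d :=
    Finset.sum_pos hvpos ⟨1, h1S⟩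
  -- key pairwise positivity for d < e, both ≥ 1
  have key : ∀ d e : ℕ, 1 ≤ d → d < e →
      0 < (a d - a e) * (v d * u e - u d * v e) := by
    intro d e hd hde
    have hd0 : (0 : ℝ) < d := by exact_mod_cast Nat.lt_of_lt_of_le Nat.zero_lt_one hd
    have he0 : (0 : ℝ) < e := by
      exact_mod_cast Nat.lt_of_lt_of_le Nat.zero_lt_one (le_of_lt (lt_of_le_of_lt hd hde))
    have hdel : (d : ℝ) < e := by exact_mod_cast hde
    have ha' : a e < a d := pow_lt_pow_right_of_lt_one₀ hc0 hc1 hde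
    have hexp : (e : ℝ) ^ (α - β) < (d : ℝ) ^ (α - β) :=
      Real.rpow_lt_rpow_of_neg hd0 hdel (by linarith)
    have hsplit : ∀ x : ℝ, 0 < x → x ^ (-β) = x ^ (-α) * x ^ (α - β) := by
      intro x hx
      rw [← Real.rpow_add hx]; ring_nf
    have h2 : u d * v e < v d * u e := by
      have hud : 0 < (d : ℝ) ^ (-α) := Real.rpow_pos_of_pos hd0 _
      have hue : 0 < (e : ℝ) ^ (-α) := Real.rpow_pos_of_pos he0 _
      show (d : ℝ) ^ (-α) * (e : ℝ) ^ (-β) < (d : ℝ) ^ (-β) * (e : ℝ) ^ (-α)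
      rw [hsplit _ he0, hsplit _ hd0]
      nlinarith [mul_pos (mul_pos hud hue) (sub_pos.2 hexp)]
    exact mul_pos (by linarith) (by linarith)
  -- nonnegativity for all pairs in S
  have hnonneg : ∀ d ∈ S, ∀ e ∈ S,
      0 ≤ (a d - a e) * (v d * u e - u d * v e) := by
    intro d hd e he
    rcases lt_trichotomy d e with h | h | h
    · exact le_of_lt (key d e (hmem d hd) h)
    · subst h; simp
    · have := key e d (hmem e he) h
      nlinarith [this]
  -- the main strict inequality
  have hmain : (∑ d ∈ S, a d * u d) * (∑ d ∈ S, v d) <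
      (∑ d ∈ S, a d * v d) * (∑ d ∈ S, u d) := by
    have hpos : 0 < ∑ d ∈ S, ∑ e ∈ S, (a d - a e) * (v d * u e - u d * v e) := by
      apply Finset.sum_pos' (fun d hd => Finset.sum_nonneg fun e he => hnonneg d hd e he)
      refine ⟨1, h1S, ?_⟩
      apply Finset.sum_pos' (fun e he => hnonneg 1 h1S e he)
      exact ⟨2, h2S, key 1 2 le_rfl one_lt_two⟩
    rw [sum_mul_sum_sub S a u v] at hpos
    linarith
  -- positivity of the denominators
  have hAα : 0 < ∑ d ∈ S, a d * u d :=
    Finset.sum_pos (fun d hd => mul_pos (pow_pos hc0 d) (hupos d hd)) ⟨1, h1S⟩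
  -- conclude
  have hgoal : (p : ℝ) / (∑ d ∈ S, u d) * (∑ d ∈ S, a d * u d) <
      (p : ℝ) / (∑ d ∈ S, v d) * (∑ d ∈ S, a d * v d) := by
    rw [div_mul_eq_mul_div, div_mul_eq_mul_div, div_lt_div_iff₀ hU hV]
    calc (p : ℝ) * (∑ d ∈ S, a d * u d) * (∑ d ∈ S, v d)
        = (p : ℝ) * ((∑ d ∈ S, a d * u d) * (∑ d ∈ S, v d)) := by ring
      _ < (p : ℝ) * ((∑ d ∈ S, a d * v d) * (∑ d ∈ S, u d)) :=
          mul_lt_mul_of_pos_left hmain hp0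
      _ = (p : ℝ) * (∑ d ∈ S, a d * v d) * (∑ d ∈ S, u d) := by ring
  exact sub_lt_sub_left hgoal (p : ℝ)
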